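/- arXiv:1908.00260 — 4 statements merged into one kernel-verified Lean document; each statement's English description precedes it below -/
import Mathlib

section
/- Let p > 1, λ₁, λ₂, λ₃ > 0, t_k < t̂_k, and let ξ, d : [t_k, t̂_k] → ℝ^n be continuous with ξ differentiable. Define ε(t) = ξ(t_k) - ξ(t) and suppose ‖ξ'(t)‖ ≤ λ₁‖ξ(t)‖ + λ₂‖ε(t)‖ + λ₃‖d(t)‖ on [t_k, t̂_k]. Let τ̂ = t̂_k - t_k, a = λ₁^p ψ(τ̂, λ₂), b = λ₃^p ψ(τ̂, λ₂), where ψ(τ̂, λ₂) = (2^{2p}(p-1)^{p-1}/(λ₂^p p^p)) (e^{λ₂ p τ̂/(2(p-1))} - 1)^{p-1} (e^{λ₂ p τ̂/2} - 1). Then ∫_{t_k}^{t̂_k} ‖ε(τ)‖^p dτ ≤ a ∫_{t_k}^{t̂_k} ‖ξ(τ)‖^p dτ + b ∫_{t_k}^{t̂_k} ‖d(τ)‖^p dτ. -/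
open Set intervalIntegral MeasureTheory

lemma my_integral_exp_mul (α a b : ℝ) (hα : α ≠ 0) :
    ∫ s in a..b, Real.exp (α * s) = (Real.exp (α * b) - Real.exp (α * a)) / α := by
  have h : ∀ x ∈ uIcc a b, HasDerivAt (fun s => Real.exp (α * s) / α) (Real.exp (α * x)) x := by
    intro x _
    have h1 : HasDerivAt (fun s : ℝ => α * s) α x := by
      simpa using (hasDerivAt_id x).const_mul α
    have h2 := (Real.hasDerivAt_exp (α * x)).comp x h1
    have h3 := h2.div_const α
    simpa [mul_div_assoc, mul_div_cancel_right₀, hα, mul_comm] using h3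
  have hint : IntervalIntegrable (fun s => Real.exp (α * s)) MeasureTheory.volume a b :=
    (Real.continuous_exp.comp (continuous_const.mul continuous_id)).intervalIntegrable a b
  have := intervalIntegral.integral_eq_sub_of_hasDerivAt h hint
  rw [this]
  ring

lemma my_add_rpow_le (a b p : ℝ) (ha : 0 ≤ a) (hb : 0 ≤ b) (hp : 0 ≤ p) :
    (a + b) ^ p ≤ 2 ^ p * (a ^ p + b ^ p) := by
  have hmax : a + b ≤ 2 * max a b := by
    rcases le_total a b with h | h
    · simp [max_eq_right h]; linarith
    · simp [max_eq_left h]; linarith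
  have h1 : (a + b) ^ p ≤ (2 * max a b) ^ p :=
    Real.rpow_le_rpow (by linarith) hmax hp
  have h2 : (2 * max a b) ^ p = 2 ^ p * (max a b) ^ p :=
    Real.mul_rpow (by norm_num) (le_max_of_le_left ha)
  have h3 : (max a b) ^ p ≤ a ^ p + b ^ p := by
    rcases le_total a b with h | h
    · rw [max_eq_right h]
      have := Real.rpow_nonneg ha p
      linarith
    · rw [max_eq_left h]
      have := Real.rpow_nonneg hb p
      linarith
  calc (a + b) ^ p ≤ 2 ^ p * (max a b) ^ p := by rw [← h2]; exact h1
    _ ≤ 2 ^ p * (a ^ p + b ^ p) := by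
        have : (0:ℝ) ≤ (2:ℝ) ^ p := Real.rpow_nonneg (by norm_num) p
        nlinarith

lemma my_const_identity {p l : ℝ} (hp : 1 < p) (hl : 0 < l) :
    (2:ℝ) ^ p / ((l * p / (2 * (p - 1))) ^ (p - 1) * (l * p / 2)) =
      2 ^ (2 * p) * (p - 1) ^ (p - 1) / (l ^ p * p ^ p) := by
  have hp0 : 0 < p := by linarith
  have hp1 : 0 < p - 1 := by linarith
  have hlp : 0 < l * p := mul_pos hl hp0
  have h2p1 : (0:ℝ) < 2 * (p - 1) := by linarith
  have h1 : (l * p / (2 * (p - 1))) ^ (p - 1) = (l * p) ^ (p - 1) / (2 * (p - 1)) ^ (p - 1) :=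
    Real.div_rpow hlp.le h2p1.le (p - 1)
  have h2 : (l * p) ^ (p - 1) = l ^ (p - 1) * p ^ (p - 1) := Real.mul_rpow hl.le hp0.le
  have h3 : (2 * (p - 1)) ^ (p - 1) = 2 ^ (p - 1) * (p - 1) ^ (p - 1) :=
    Real.mul_rpow (by norm_num) hp1.le
  have hl1 : l ^ p = l ^ (p - 1) * l := by
    have h := Real.rpow_add hl (p - 1) 1
    rw [Real.rpow_one] at h
    rw [← h]; norm_num
  have hpp : p ^ p = p ^ (p - 1) * p := by
    have h := Real.rpow_add hp0 (p - 1) 1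
    rw [Real.rpow_one] at h
    rw [← h]; norm_num
  have h2two : (2:ℝ) ^ (2 * p) = 2 ^ p * 2 ^ (p - 1) * 2 := by
    have h := Real.rpow_add (two_pos) (p + (p - 1)) 1
    rw [Real.rpow_one, Real.rpow_add (two_pos) p (p - 1)] at h
    rw [← h]; ring_nf
  rw [h1, h2, h3, hl1, hpp, h2two]
  have e1 : (0:ℝ) < l ^ (p - 1) := Real.rpow_pos_of_pos hl _
  have e2 : (0:ℝ) < p ^ (p - 1) := Real.rpow_pos_of_pos hp0 _
  have e3 : (0:ℝ) < (2:ℝ) ^ (p - 1) := Real.rpow_pos_of_pos two_pos _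
  have e4 : (0:ℝ) < (p - 1) ^ (p - 1) := Real.rpow_pos_of_pos hp1 _
  have e5 : (0:ℝ) < (2:ℝ) ^ p := Real.rpow_pos_of_pos two_pos _
  field_simp

lemma my_gronwall {a b K : ℝ} (hab : a ≤ b) (hK : 0 < K) {ρ g : ℝ → ℝ}
    (hρ : ContinuousOn ρ (Icc a b)) (hg : ContinuousOn g (Icc a b))
    (h : ∀ t ∈ Icc a b, ρ t ≤ ∫ s in a..t, (K * ρ s + g s)) :
    ∀ t ∈ Icc a b, ρ t ≤ ∫ s in a..t, Real.exp (K * (t - s)) * g s := by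
  intro t htmem
  have huIcc : uIcc a b = Icc a b := uIcc_of_le hab
  set F : ℝ → ℝ := fun s => K * ρ s + g s with hFdef
  have hFc : ContinuousOn F (Icc a b) := (continuousOn_const.mul hρ).add hg
  set G : ℝ → ℝ := fun s => Real.exp (-K * s) * g s with hGdef
  have hGc : ContinuousOn G (Icc a b) :=
    ((Real.continuous_exp.comp (continuous_const.mul continuous_id)).continuousOn).mul hg
  set u : ℝ → ℝ := fun t => ∫ s in a..t, F s with hudef
  set v : ℝ → ℝ := fun t => ∫ s in a..t, G s with hvdef
  set w : ℝ → ℝ := fun t => Real.exp (-K * t) * u t - v t with hwdef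
  have hFI : IntegrableOn F (uIcc a b) := by rw [huIcc]; exact hFc.integrableOn_Icc
  have hGI : IntegrableOn G (uIcc a b) := by rw [huIcc]; exact hGc.integrableOn_Icc
  have huc : ContinuousOn u (Icc a b) := by
    rw [← huIcc]; exact intervalIntegral.continuousOn_primitive_interval hFI
  have hvc : ContinuousOn v (Icc a b) := by
    rw [← huIcc]; exact intervalIntegral.continuousOn_primitive_interval hGI
  have hwc : ContinuousOn w (Icc a b) :=
    (((Real.continuous_exp.comp (continuous_const.mul continuous_id)).continuousOn).mul huc).sub hvc
  -- derivative of w is nonpositive on the interior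
  have hkey : ∀ x ∈ interior (Icc a b), ∃ y, HasDerivAt w y x ∧ y ≤ 0 := by
    rw [interior_Icc]
    intro x hx
    have hxIcc : x ∈ Icc a b := Ioo_subset_Icc_self hx
    have hnhds : Icc a b ∈ nhds x := Icc_mem_nhds hx.1 hx.2
    have hFx : ContinuousAt F x := hFc.continuousAt hnhds
    have hGx : ContinuousAt G x := hGc.continuousAt hnhds
    have hFii : IntervalIntegrable F MeasureTheory.volume a x := by
      apply ContinuousOn.intervalIntegrable
      apply hFc.mono
      rw [uIcc_of_le hx.1.le]
      exact Icc_subset_Icc le_rfl hxIcc.2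
    have hGii : IntervalIntegrable G MeasureTheory.volume a x := by
      apply ContinuousOn.intervalIntegrable
      apply hGc.mono
      rw [uIcc_of_le hx.1.le]
      exact Icc_subset_Icc le_rfl hxIcc.2
    have hu' : HasDerivAt u (F x) x :=
      intervalIntegral.integral_hasDerivAt_right hFii
        ⟨Icc a b, hnhds, hFc.aestronglyMeasurable measurableSet_Icc⟩ hFx
    have hv' : HasDerivAt v (G x) x :=
      intervalIntegral.integral_hasDerivAt_right hGii
        ⟨Icc a b, hnhds, hGc.aestronglyMeasurable measurableSet_Icc⟩ hGx
    have hexp' : HasDerivAt (fun t => Real.exp (-K * t)) (-K * Real.exp (-K * x)) x := by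
      have h1 : HasDerivAt (fun t : ℝ => -K * t) (-K) x := by
        simpa using (hasDerivAt_id x).const_mul (-K)
      simpa [Function.comp_def, mul_comm] using (Real.hasDerivAt_exp (-K * x)).comp x h1
    have hw' : HasDerivAt w (-K * Real.exp (-K * x) * u x + Real.exp (-K * x) * F x - G x) x :=
      (hexp'.mul hu').sub hv'
    refine ⟨_, hw', ?_⟩
    have hle : ρ x ≤ u x := h x hxIcc
    have heq : -K * Real.exp (-K * x) * u x + Real.exp (-K * x) * F x - G x
        = K * Real.exp (-K * x) * (ρ x - u x) := by
      simp only [hFdef, hGdef]; ring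
    rw [heq]
    have hsub : ρ x - u x ≤ 0 := by linarith
    exact mul_nonpos_of_nonneg_of_nonpos (by positivity) hsub
  have hanti : AntitoneOn w (Icc a b) := by
    apply antitoneOn_of_deriv_nonpos (convex_Icc a b) hwc
    · intro x hx
      obtain ⟨y, hy, _⟩ := hkey x hx
      exact hy.differentiableAt.differentiableWithinAt
    · intro x hx
      obtain ⟨y, hy, hy0⟩ := hkey x hx
      rw [hy.deriv]; exact hy0
  have hwa : w a = 0 := by
    simp [hwdef, hudef, hvdef, intervalIntegral.integral_same]
  have hwt : w t ≤ 0 := by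
    rw [← hwa]
    exact hanti (left_mem_Icc.mpr hab) htmem htmem.1
  -- from w t ≤ 0 conclude
  have hut : Real.exp (-K * t) * u t ≤ v t := by
    have := hwt; simp only [hwdef] at this; linarith
  have hmain : u t ≤ Real.exp (K * t) * v t := by
    have hepos : 0 < Real.exp (-K * t) := Real.exp_pos _
    have h1 : Real.exp (K * t) * (Real.exp (-K * t) * u t) ≤ Real.exp (K * t) * v t :=
      mul_le_mul_of_nonneg_left hut (Real.exp_pos _).le
    calc u t = Real.exp (K * t) * (Real.exp (-K * t) * u t) := by
          rw [← mul_assoc, ← Real.exp_add]; simp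
      _ ≤ Real.exp (K * t) * v t := h1
  have hconv : Real.exp (K * t) * v t = ∫ s in a..t, Real.exp (K * (t - s)) * g s := by
    rw [hvdef]
    rw [← intervalIntegral.integral_const_mul]
    apply intervalIntegral.integral_congr
    intro s _
    simp only [hGdef]
    rw [← mul_assoc, ← Real.exp_add]
    ring_nf
  calc ρ t ≤ u t := h t htmem
    _ ≤ Real.exp (K * t) * v t := hmain
    _ = _ := hconv

lemma my_holder {p q c γ β A tk tkhat t : ℝ} {g : ℝ → ℝ}
    (hpq : p.HolderConjugate q) (hc : 0 < c)
    (hγ : γ = c * q / 2) (hβ : β = c * p / 2)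
    (hA : A = (Real.exp (γ * (tkhat - tk)) - 1) / γ)
    (ht : tk ≤ t) (htt : t ≤ tkhat)
    (hgc : ContinuousOn g (Icc tk tkhat)) (hg0 : ∀ s, 0 ≤ g s) :
    (∫ s in tk..t, Real.exp (c * (t - s)) * g s) ^ p ≤
      A ^ (p - 1) * ∫ s in tk..t, Real.exp (β * (t - s)) * g s ^ p := by
  have hp1 : 1 < p := hpq.lt
  have hp0 : (0:ℝ) < p := hpq.pos
  have hq0 : (0:ℝ) < q := hpq.symm.pos
  have hγ0 : 0 < γ := by rw [hγ]; positivity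
  have hβ0 : 0 < β := by rw [hβ]; positivity
  have hA0 : 0 ≤ A := by
    rw [hA]
    apply div_nonneg _ hγ0.le
    have : (1:ℝ) ≤ Real.exp (γ * (tkhat - tk)) := by
      rw [← Real.exp_zero]; exact Real.exp_le_exp.mpr (by nlinarith)
    linarith
  set μ : MeasureTheory.Measure ℝ := MeasureTheory.volume.restrict (Ioc tk t) with hμdef
  haveI : MeasureTheory.IsFiniteMeasure μ := by
    constructor
    rw [hμdef, MeasureTheory.Measure.restrict_apply_univ]
    exact measure_Ioc_lt_top
  set f₁ : ℝ → ℝ := fun s => Real.exp (c * (t - s) / 2) * g s with hf₁def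
  set f₂ : ℝ → ℝ := fun s => Real.exp (c * (t - s) / 2) with hf₂def
  have hIocsub : Ioc tk t ⊆ Icc tk tkhat := fun s hs => ⟨hs.1.le, le_trans hs.2 htt⟩
  have hexpc : Continuous (fun s : ℝ => Real.exp (c * (t - s) / 2)) := by
    apply Real.continuous_exp.comp
    continuity
  have hf₁c : ContinuousOn f₁ (Ioc tk t) := hexpc.continuousOn.mul (hgc.mono hIocsub)
  have hf₁m : MeasureTheory.AEStronglyMeasurable f₁ μ :=
    hf₁c.aestronglyMeasurable measurableSet_Ioc
  have hf₂m : MeasureTheory.AEStronglyMeasurable f₂ μ :=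
    hexpc.continuousOn.aestronglyMeasurable measurableSet_Ioc
  obtain ⟨Mg, hMg⟩ := (isCompact_Icc (a := tk) (b := tkhat)).exists_bound_of_continuousOn hgc
  have hexpbound : ∀ s ∈ Ioc tk t, Real.exp (c * (t - s) / 2) ≤
      Real.exp (c * (tkhat - tk) / 2) := by
    intro s hs
    apply Real.exp_le_exp.mpr
    have h1 : t - s ≤ tkhat - tk := by
      have := hs.1; linarith
    nlinarith
  have hf₁L : MeasureTheory.MemLp f₁ (ENNReal.ofReal p) μ := by
    refine MeasureTheory.MemLp.of_bound hf₁m (Real.exp (c * (tkhat - tk) / 2) * Mg) ?_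
    filter_upwards [MeasureTheory.ae_restrict_mem measurableSet_Ioc] with s hs
    simp only [hf₁def, Real.norm_eq_abs, abs_mul, abs_of_pos (Real.exp_pos _),
      abs_of_nonneg (hg0 s)]
    have h1 := hexpbound s hs
    have h2 : g s ≤ Mg := le_trans (le_abs_self _) (by simpa using hMg s (hIocsub hs))
    nlinarith [Real.exp_pos (c * (t - s) / 2), hg0 s]
  have hf₂L : MeasureTheory.MemLp f₂ (ENNReal.ofReal q) μ := by
    refine MeasureTheory.MemLp.of_bound hf₂m (Real.exp (c * (tkhat - tk) / 2)) ?_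
    filter_upwards [MeasureTheory.ae_restrict_mem measurableSet_Ioc] with s hs
    simp only [hf₂def, Real.norm_eq_abs, abs_of_pos (Real.exp_pos _)]
    exact hexpbound s hs
  have hHolder := MeasureTheory.integral_mul_le_Lp_mul_Lq_of_nonneg hpq
    (MeasureTheory.ae_of_all μ (fun s => mul_nonneg (Real.exp_pos _).le (hg0 s)))
    (MeasureTheory.ae_of_all μ (fun s => (Real.exp_pos _).le)) hf₁L hf₂L
  have hGq : (∫ s in tk..t, Real.exp (c * (t - s)) * g s) = ∫ s, f₁ s * f₂ s ∂μ := by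
    rw [intervalIntegral.integral_of_le ht]
    apply MeasureTheory.setIntegral_congr_fun measurableSet_Ioc
    intro s _
    simp only [hf₁def, hf₂def]
    rw [mul_comm (Real.exp (c * (t - s) / 2)) (g s), mul_assoc, ← Real.exp_add]
    ring_nf
  have hI₂q : (∫ s, f₁ s ^ p ∂μ) = ∫ s in tk..t, Real.exp (β * (t - s)) * g s ^ p := by
    rw [intervalIntegral.integral_of_le ht]
    apply MeasureTheory.setIntegral_congr_fun measurableSet_Ioc
    intro s _
    simp only [hf₁def]
    rw [Real.mul_rpow (Real.exp_pos _).le (hg0 s), ← Real.exp_mul]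
    congr 2
    rw [hβ]; ring
  have hJq : (∫ s, f₂ s ^ q ∂μ) = ∫ s in tk..t, Real.exp (γ * (t - s)) := by
    rw [intervalIntegral.integral_of_le ht]
    apply MeasureTheory.setIntegral_congr_fun measurableSet_Ioc
    intro s _
    simp only [hf₂def]
    rw [← Real.exp_mul]
    congr 1
    rw [hγ]; ring
  have hJval : (∫ s in tk..t, Real.exp (γ * (t - s))) = (Real.exp (γ * (t - tk)) - 1) / γ := by
    have h1 : ∀ s ∈ uIcc tk t, Real.exp (γ * (t - s)) =
        Real.exp (γ * t) * Real.exp (-γ * s) := by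
      intro s _
      rw [← Real.exp_add]; ring_nf
    rw [intervalIntegral.integral_congr h1, intervalIntegral.integral_const_mul,
      my_integral_exp_mul (-γ) tk t (neg_ne_zero.mpr hγ0.ne')]
    have e1 : Real.exp (γ * t) * Real.exp (-γ * t) = 1 := by
      rw [← Real.exp_add]; norm_num
    have e2 : Real.exp (γ * t) * Real.exp (-γ * tk) = Real.exp (γ * (t - tk)) := by
      rw [← Real.exp_add]; ring_nf
    rw [← mul_div_assoc, mul_sub, e1, e2, div_neg, ← neg_div, neg_sub]
  have hJA : (∫ s in tk..t, Real.exp (γ * (t - s))) ≤ A := by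
    rw [hJval, hA]
    have h2 : Real.exp (γ * (t - tk)) ≤ Real.exp (γ * (tkhat - tk)) :=
      Real.exp_le_exp.mpr (by nlinarith)
    gcongr
  have hI₂0 : 0 ≤ ∫ s in tk..t, Real.exp (β * (t - s)) * g s ^ p :=
    intervalIntegral.integral_nonneg ht
      (fun s _ => mul_nonneg (Real.exp_pos _).le (Real.rpow_nonneg (hg0 s) _))
  have hJ0 : 0 ≤ ∫ s in tk..t, Real.exp (γ * (t - s)) :=
    intervalIntegral.integral_nonneg ht (fun s _ => (Real.exp_pos _).le)
  have hG0 : 0 ≤ ∫ s in tk..t, Real.exp (c * (t - s)) * g s :=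
    intervalIntegral.integral_nonneg ht (fun s _ => mul_nonneg (Real.exp_pos _).le (hg0 s))
  have hGle : (∫ s in tk..t, Real.exp (c * (t - s)) * g s) ≤
      (∫ s in tk..t, Real.exp (β * (t - s)) * g s ^ p) ^ (1/p) * A ^ (1/q) := by
    rw [hGq]
    refine le_trans hHolder ?_
    rw [hI₂q, hJq]
    apply mul_le_mul_of_nonneg_left _ (Real.rpow_nonneg hI₂0 _)
    exact Real.rpow_le_rpow hJ0 hJA (by positivity)
  have hrpow : (∫ s in tk..t, Real.exp (c * (t - s)) * g s) ^ p ≤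
      ((∫ s in tk..t, Real.exp (β * (t - s)) * g s ^ p) ^ (1/p) * A ^ (1/q)) ^ p :=
    Real.rpow_le_rpow hG0 hGle hp0.le
  refine le_trans hrpow (le_of_eq ?_)
  have e1 : (1:ℝ)/p * p = 1 := by field_simp
  have e2 : (1:ℝ)/q * p = p - 1 := by
    have h := hpq.inv_add_inv_eq_one
    have hqinv : q⁻¹ = 1 - p⁻¹ := by linarith
    rw [one_div, hqinv]
    field_simp
  rw [Real.mul_rpow (Real.rpow_nonneg hI₂0 _) (Real.rpow_nonneg hA0 _),
    ← Real.rpow_mul hI₂0, ← Real.rpow_mul hA0, e1, e2, Real.rpow_one]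
  ring

lemma my_integrated {β A' a b : ℝ} (hβ : 0 < β) (hA' : 0 ≤ A') {ρ h : ℝ → ℝ} (hab : a ≤ b)
    (hρc : ContinuousOn ρ (Icc a b)) (hc : ContinuousOn h (Icc a b)) (h0 : ∀ s, 0 ≤ h s)
    (hle : ∀ t ∈ Icc a b, ρ t ≤ A' * ∫ s in a..t, Real.exp (β * (t - s)) * h s) :
    (∫ t in a..b, ρ t) ≤ A' * ((Real.exp (β * (b - a)) - 1) / β) * ∫ s in a..b, h s := by
  have huIcc : uIcc a b = Icc a b := uIcc_of_le hab
  set G : ℝ → ℝ := fun s => Real.exp (-β * s) * h s with hGdef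
  have hGc : ContinuousOn G (Icc a b) :=
    ((Real.continuous_exp.comp (continuous_const.mul continuous_id)).continuousOn).mul hc
  set H : ℝ → ℝ := fun t => ∫ s in a..t, G s with hHdef
  have hGI : IntegrableOn G (uIcc a b) := by rw [huIcc]; exact hGc.integrableOn_Icc
  have hHc : ContinuousOn H (Icc a b) := by
    rw [← huIcc]; exact intervalIntegral.continuousOn_primitive_interval hGI
  -- rewrite the inner integral
  have hinner : ∀ t, (∫ s in a..t, Real.exp (β * (t - s)) * h s) = Real.exp (β * t) * H t := by
    intro t
    rw [hHdef, ← intervalIntegral.integral_const_mul]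
    apply intervalIntegral.integral_congr
    intro s _
    simp only [hGdef]
    rw [← mul_assoc, ← Real.exp_add]
    ring_nf
  have hEHc : ContinuousOn (fun t => Real.exp (β * t) * H t) (Icc a b) :=
    ((Real.continuous_exp.comp (continuous_const.mul continuous_id)).continuousOn).mul hHc
  have hint1 : IntervalIntegrable (fun t => Real.exp (β * t) * H t) MeasureTheory.volume a b := by
    apply ContinuousOn.intervalIntegrable; rw [huIcc]; exact hEHc
  have hinth : IntervalIntegrable h MeasureTheory.volume a b := by
    apply ContinuousOn.intervalIntegrable; rw [huIcc]; exact hc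
  -- step 1: monotone comparison
  have step1 : (∫ t in a..b, ρ t) ≤ A' * ∫ t in a..b, Real.exp (β * t) * H t := by
    rw [← intervalIntegral.integral_const_mul]
    apply intervalIntegral.integral_mono_on hab
    · apply ContinuousOn.intervalIntegrable; rw [huIcc]; exact hρc
    · exact hint1.const_mul A'
    · intro t htm
      refine le_trans (hle t htm) (le_of_eq ?_)
      rw [hinner t]
  -- step 2: integration by parts
  have step2 : (∫ t in a..b, Real.exp (β * t) * H t) =
      Real.exp (β * b) / β * H b - (∫ s in a..b, h s) / β := by
    have hP : ∀ x ∈ Ioo a b, HasDerivAt (fun t => Real.exp (β * t) / β * H t)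
        (Real.exp (β * x) * H x + h x / β) x := by
      intro x hx
      have hxIcc : x ∈ Icc a b := Ioo_subset_Icc_self hx
      have hnhds : Icc a b ∈ nhds x := Icc_mem_nhds hx.1 hx.2
      have hGx : ContinuousAt G x := hGc.continuousAt hnhds
      have hGii : IntervalIntegrable G MeasureTheory.volume a x := by
        apply ContinuousOn.intervalIntegrable
        apply hGc.mono
        rw [uIcc_of_le hx.1.le]
        exact Icc_subset_Icc le_rfl hxIcc.2
      have hH' : HasDerivAt H (G x) x :=
        intervalIntegral.integral_hasDerivAt_right hGii
          ⟨Icc a b, hnhds, hGc.aestronglyMeasurable measurableSet_Icc⟩ hGx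
      have hexp' : HasDerivAt (fun t => Real.exp (β * t) / β) (Real.exp (β * x)) x := by
        have h1 : HasDerivAt (fun t : ℝ => β * t) β x := by
          simpa using (hasDerivAt_id x).const_mul β
        have h2 := ((Real.hasDerivAt_exp (β * x)).comp x h1).div_const β
        simpa [Function.comp_def, mul_comm, mul_div_assoc, mul_div_cancel_left₀, hβ.ne']
          using h2
      have hprod := hexp'.mul hH'
      have heq : Real.exp (β * x) * H x + Real.exp (β * x) / β * G x
          = Real.exp (β * x) * H x + h x / β := by
        simp only [hGdef]
        rw [div_mul_eq_mul_div, ← mul_assoc, ← Real.exp_add]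
        norm_num
      rw [heq] at hprod
      exact hprod
    have hcont : ContinuousOn (fun t => Real.exp (β * t) / β * H t) (Icc a b) :=
      (((Real.continuous_exp.comp (continuous_const.mul continuous_id)).continuousOn).div_const
        β).mul hHc
    have hint2 : IntervalIntegrable (fun x => Real.exp (β * x) * H x + h x / β)
        MeasureTheory.volume a b := hint1.add (hinth.div_const β)
    have hFTC := intervalIntegral.integral_eq_sub_of_hasDeriv_right_of_le hab hcont
      (fun x hx => (hP x hx).hasDerivWithinAt) hint2
    rw [intervalIntegral.integral_add hint1 (hinth.div_const β)] at hFTC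
    have hHa : H a = 0 := by simp [hHdef]
    rw [hHa] at hFTC
    have : (∫ x in a..b, h x / β) = (∫ s in a..b, h s) / β := by
      rw [intervalIntegral.integral_div]
    rw [this, mul_zero] at hFTC
    linarith
  -- step 3: bound H b
  have step3 : H b ≤ Real.exp (-β * a) * ∫ s in a..b, h s := by
    rw [hHdef, ← intervalIntegral.integral_const_mul]
    apply intervalIntegral.integral_mono_on hab
    · apply ContinuousOn.intervalIntegrable; rw [huIcc]; exact hGc
    · exact (hinth.const_mul _)
    · intro s hs
      simp only [hGdef]
      apply mul_le_mul_of_nonneg_right _ (h0 s)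
      exact Real.exp_le_exp.mpr (by nlinarith [hs.1])
  have hint0 : 0 ≤ ∫ s in a..b, h s := intervalIntegral.integral_nonneg hab fun s _ => h0 s
  -- combine
  have step4 : (∫ t in a..b, Real.exp (β * t) * H t) ≤
      ((Real.exp (β * (b - a)) - 1) / β) * ∫ s in a..b, h s := by
    rw [step2]
    have h1 : Real.exp (β * b) / β * H b ≤
        Real.exp (β * b) / β * (Real.exp (-β * a) * ∫ s in a..b, h s) :=
      mul_le_mul_of_nonneg_left step3 (by positivity)
    have h2 : Real.exp (β * b) * Real.exp (-β * a) = Real.exp (β * (b - a)) := by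
      rw [← Real.exp_add]; ring_nf
    have h3 : Real.exp (β * b) / β * (Real.exp (-β * a) * ∫ s in a..b, h s)
        - (∫ s in a..b, h s) / β
        = ((Real.exp (β * (b - a)) - 1) / β) * ∫ s in a..b, h s := by
      rw [← h2]; field_simp
    linarith
  calc (∫ t in a..b, ρ t) ≤ A' * ∫ t in a..b, Real.exp (β * t) * H t := step1
    _ ≤ A' * (((Real.exp (β * (b - a)) - 1) / β) * ∫ s in a..b, h s) :=
        mul_le_mul_of_nonneg_left step4 hA'
    _ = A' * ((Real.exp (β * (b - a)) - 1) / β) * ∫ s in a..b, h s := by ring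


/-- Lemma 5: the accumulated `p`-th power of the sampling error `ε(t) = ξ(t_k) - ξ(t)`
over one inter-sample interval is bounded by `a ∫‖ξ‖^p + b ∫‖d‖^p` with
`a = λ₁^p ψ(τ̂, λ₂)`, `b = λ₃^p ψ(τ̂, λ₂)`, `τ̂ = t̂_k - t_k`. -/
theorem sampling_error_accumulated_bound (n : ℕ) (p l₁ l₂ l₃ tk tkhat : ℝ)
    (hp : 1 < p) (h₁ : 0 < l₁) (h₂ : 0 < l₂) (h₃ : 0 < l₃) (ht : tk < tkhat)
    (ξ ξ' d : ℝ → EuclideanSpace ℝ (Fin n))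
    (hd : ContinuousOn d (Icc tk tkhat))
    (hξ : ∀ t ∈ Icc tk tkhat, HasDerivAt ξ (ξ' t) t)
    (hb : ∀ t ∈ Icc tk tkhat,
      ‖ξ' t‖ ≤ l₁ * ‖ξ t‖ + l₂ * ‖ξ tk - ξ t‖ + l₃ * ‖d t‖) :
    (∫ τ in tk..tkhat, ‖ξ tk - ξ τ‖ ^ p) ≤
      l₁ ^ p * ((2:ℝ) ^ (2 * p) * (p - 1) ^ (p - 1) / (l₂ ^ p * p ^ p) *
          (Real.exp (l₂ * p * (tkhat - tk) / (2 * (p - 1))) - 1) ^ (p - 1) *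
          (Real.exp (l₂ * p * (tkhat - tk) / 2) - 1)) *
        (∫ τ in tk..tkhat, ‖ξ τ‖ ^ p) +
      l₃ ^ p * ((2:ℝ) ^ (2 * p) * (p - 1) ^ (p - 1) / (l₂ ^ p * p ^ p) *
          (Real.exp (l₂ * p * (tkhat - tk) / (2 * (p - 1))) - 1) ^ (p - 1) *
          (Real.exp (l₂ * p * (tkhat - tk) / 2) - 1)) *
        (∫ τ in tk..tkhat, ‖d τ‖ ^ p) := by
  have hp0 : (0:ℝ) < p := lt_trans one_pos hp
  have hp1 : (0:ℝ) < p - 1 := sub_pos.2 hp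
  set q : ℝ := p / (p - 1) with hqdef
  have hq0 : 0 < q := div_pos hp0 hp1
  have hpq : p.HolderConjugate q := (Real.holderConjugate_iff_eq_conjExponent hp).mpr rfl
  set γ : ℝ := l₂ * p / (2 * (p - 1)) with hγdef
  set β : ℝ := l₂ * p / 2 with hβdef
  have hγ0 : 0 < γ := by rw [hγdef]; positivity
  have hβ0 : 0 < β := by rw [hβdef]; positivity
  have hγq : γ = l₂ * q / 2 := by rw [hqdef, hγdef]; field_simp
  set A : ℝ := (Real.exp (γ * (tkhat - tk)) - 1) / γ with hAdef
  set B : ℝ := (Real.exp (β * (tkhat - tk)) - 1) / β with hBdef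
  have hexp1 : ∀ x : ℝ, 0 ≤ x → (1:ℝ) ≤ Real.exp x := fun x hx => by
    rw [← Real.exp_zero]; exact Real.exp_le_exp.mpr hx
  have hA0 : 0 ≤ A := div_nonneg (by
    have := hexp1 (γ * (tkhat - tk)) (by nlinarith); linarith) hγ0.le
  have hB0 : 0 ≤ B := div_nonneg (by
    have := hexp1 (β * (tkhat - tk)) (by nlinarith); linarith) hβ0.le
  set ρ : ℝ → ℝ := fun t => ‖ξ tk - ξ t‖ with hρdef
  set g : ℝ → ℝ := fun t => l₁ * ‖ξ t‖ + l₃ * ‖d t‖ with hgdef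
  have hg0 : ∀ t, 0 ≤ g t := fun t => by rw [hgdef]; positivity
  have huIcc : uIcc tk tkhat = Icc tk tkhat := uIcc_of_le ht.le
  -- continuity
  have hcξ : ContinuousOn ξ (Icc tk tkhat) := fun t htm =>
    ((hξ t htm).continuousAt).continuousWithinAt
  have hcρ : ContinuousOn ρ (Icc tk tkhat) := (continuousOn_const.sub hcξ).norm
  have hcg : ContinuousOn g (Icc tk tkhat) :=
    (continuousOn_const.mul hcξ.norm).add (continuousOn_const.mul hd.norm)
  have hcgp : ContinuousOn (fun t => g t ^ p) (Icc tk tkhat) :=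
    hcg.rpow_const (fun t _ => Or.inr hp0.le)
  have hcρp : ContinuousOn (fun t => ρ t ^ p) (Icc tk tkhat) :=
    hcρ.rpow_const (fun t _ => Or.inr hp0.le)
  have hIccsub : ∀ t ∈ Icc tk tkhat, Icc tk t ⊆ Icc tk tkhat := fun t htm =>
    Icc_subset_Icc le_rfl htm.2
  -- integrability of ξ'
  have hbnd : ContinuousOn (fun t => l₁ * ‖ξ t‖ + l₂ * ρ t + l₃ * ‖d t‖) (Icc tk tkhat) :=
    ((continuousOn_const.mul hcξ.norm).add (continuousOn_const.mul hcρ)).add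
      (continuousOn_const.mul hd.norm)
  obtain ⟨M, hM⟩ := (isCompact_Icc (a := tk) (b := tkhat)).exists_bound_of_continuousOn hbnd
  have hξ'M : ∀ t ∈ Icc tk tkhat, ‖ξ' t‖ ≤ M := by
    intro t htm
    refine le_trans (hb t htm) (le_trans (le_abs_self _) ?_)
    simpa using hM t htm
  have hxint : IntegrableOn ξ' (Icc tk tkhat) := by
    have hd1 : EqOn (deriv ξ) ξ' (Icc tk tkhat) := fun t htm => (hξ t htm).deriv
    refine IntegrableOn.congr_fun ?_ hd1 measurableSet_Icc
    refine Integrable.mono' (g := fun _ => M)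
      ((integrableOn_const_iff).mpr (Or.inr measure_Icc_lt_top)) ?_ ?_
    · exact (measurable_deriv ξ).aestronglyMeasurable.restrict
    · filter_upwards [MeasureTheory.ae_restrict_mem measurableSet_Icc] with t htm
      rw [hd1 htm]
      exact hξ'M t htm
  have hxii : ∀ t ∈ Icc tk tkhat, IntervalIntegrable ξ' MeasureTheory.volume tk t := by
    intro t htm
    refine (hxint.mono_set ?_).intervalIntegrable
    rw [uIcc_of_le htm.1]
    exact hIccsub t htm
  -- integral inequality for ρ
  have hρbound : ∀ t ∈ Icc tk tkhat, ρ t ≤ ∫ s in tk..t, (l₂ * ρ s + g s) := by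
    intro t htm
    have hFTC : ∫ s in tk..t, ξ' s = ξ t - ξ tk := by
      apply intervalIntegral.integral_eq_sub_of_hasDerivAt _ (hxii t htm)
      intro x hx
      rw [uIcc_of_le htm.1] at hx
      exact hξ x (hIccsub t htm hx)
    have h1 : ρ t = ‖∫ s in tk..t, ξ' s‖ := by rw [hFTC, hρdef, norm_sub_rev]
    rw [h1]
    refine le_trans (intervalIntegral.norm_integral_le_integral_norm htm.1) ?_
    apply intervalIntegral.integral_mono_on htm.1 ((hxii t htm).norm)
    · apply ContinuousOn.intervalIntegrable
      rw [uIcc_of_le htm.1]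
      exact ((continuousOn_const.mul hcρ).add hcg).mono (hIccsub t htm)
    · intro s hs
      have := hb s (hIccsub t htm hs)
      simp only [hρdef, hgdef]
      linarith
  -- Gronwall
  have hρG : ∀ t ∈ Icc tk tkhat, ρ t ≤ ∫ s in tk..t, Real.exp (l₂ * (t - s)) * g s :=
    my_gronwall ht.le h₂ hcρ hcg hρbound
  -- pointwise Hölder estimate
  have hholder : ∀ t ∈ Icc tk tkhat,
      ρ t ^ p ≤ A ^ (p - 1) * ∫ s in tk..t, Real.exp (β * (t - s)) * g s ^ p := by
    intro t htm
    have h1 : ρ t ^ p ≤ (∫ s in tk..t, Real.exp (l₂ * (t - s)) * g s) ^ p :=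
      Real.rpow_le_rpow (norm_nonneg _) (hρG t htm) hp0.le
    exact le_trans h1 (my_holder hpq h₂ hγq hβdef hAdef htm.1 htm.2 hcg hg0)
  -- integrate
  have hstepFG := my_integrated (A' := A ^ (p - 1)) hβ0 (Real.rpow_nonneg hA0 _) ht.le
    hcρp hcgp (fun s => Real.rpow_nonneg (hg0 s) p) hholder
  -- bound ∫ g^p
  have hi1 : IntervalIntegrable (fun τ => ‖ξ τ‖ ^ p) MeasureTheory.volume tk tkhat := by
    apply ContinuousOn.intervalIntegrable
    rw [huIcc]
    exact hcξ.norm.rpow_const (fun t _ => Or.inr hp0.le)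
  have hi2 : IntervalIntegrable (fun τ => ‖d τ‖ ^ p) MeasureTheory.volume tk tkhat := by
    apply ContinuousOn.intervalIntegrable
    rw [huIcc]
    exact hd.norm.rpow_const (fun t _ => Or.inr hp0.le)
  have hstepH : (∫ s in tk..tkhat, g s ^ p) ≤ 2 ^ p *
      (l₁ ^ p * (∫ τ in tk..tkhat, ‖ξ τ‖ ^ p) + l₃ ^ p * (∫ τ in tk..tkhat, ‖d τ‖ ^ p)) := by
    have hmono : (∫ s in tk..tkhat, g s ^ p) ≤
        ∫ s in tk..tkhat, 2 ^ p * (l₁ ^ p * ‖ξ s‖ ^ p + l₃ ^ p * ‖d s‖ ^ p) := by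
      apply intervalIntegral.integral_mono_on ht.le
      · apply ContinuousOn.intervalIntegrable; rw [huIcc]; exact hcgp
      · exact (((hi1.const_mul _).add (hi2.const_mul _)).const_mul _)
      · intro s _
        have h1 := my_add_rpow_le (l₁ * ‖ξ s‖) (l₃ * ‖d s‖) p (by positivity) (by positivity)
          hp0.le
        rw [Real.mul_rpow h₁.le (norm_nonneg _), Real.mul_rpow h₃.le (norm_nonneg _)] at h1
        simpa [hgdef] using h1
    refine le_trans hmono (le_of_eq ?_)
    rw [intervalIntegral.integral_const_mul,
      intervalIntegral.integral_add (hi1.const_mul _) (hi2.const_mul _),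
      intervalIntegral.integral_const_mul, intervalIntegral.integral_const_mul]
  -- combine
  have hABnn : 0 ≤ A ^ (p - 1) * ((Real.exp (β * (tkhat - tk)) - 1) / β) :=
    mul_nonneg (Real.rpow_nonneg hA0 _) hB0
  have hfinal : (∫ τ in tk..tkhat, ρ τ ^ p) ≤
      A ^ (p - 1) * ((Real.exp (β * (tkhat - tk)) - 1) / β) *
        (2 ^ p * (l₁ ^ p * (∫ τ in tk..tkhat, ‖ξ τ‖ ^ p) +
          l₃ ^ p * (∫ τ in tk..tkhat, ‖d τ‖ ^ p))) := by
    exact le_trans hstepFG (mul_le_mul_of_nonneg_left hstepH hABnn)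
  -- constant identity
  have hE₁0 : 0 ≤ Real.exp (γ * (tkhat - tk)) - 1 := by
    have := hexp1 (γ * (tkhat - tk)) (by nlinarith); linarith
  have hArw : A ^ (p - 1) = (Real.exp (γ * (tkhat - tk)) - 1) ^ (p - 1) / γ ^ (p - 1) := by
    rw [hAdef, Real.div_rpow hE₁0 hγ0.le]
  have hkey := my_const_identity hp h₂
  have hγne : γ ^ (p - 1) ≠ 0 := (Real.rpow_pos_of_pos hγ0 _).ne'
  have hconst : A ^ (p - 1) * ((Real.exp (β * (tkhat - tk)) - 1) / β) * 2 ^ p =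
      2 ^ (2 * p) * (p - 1) ^ (p - 1) / (l₂ ^ p * p ^ p) *
        (Real.exp (l₂ * p * (tkhat - tk) / (2 * (p - 1))) - 1) ^ (p - 1) *
        (Real.exp (l₂ * p * (tkhat - tk) / 2) - 1) := by
    have hE1 : γ * (tkhat - tk) = l₂ * p * (tkhat - tk) / (2 * (p - 1)) := by
      rw [hγdef]; ring
    have hE2 : β * (tkhat - tk) = l₂ * p * (tkhat - tk) / 2 := by
      rw [hβdef]; ring
    rw [hArw, ← hE1, ← hE2, ← hkey, hγdef, hβdef]
    field_simp
  have hgoal : (∫ τ in tk..tkhat, ‖ξ tk - ξ τ‖ ^ p) = ∫ τ in tk..tkhat, ρ τ ^ p := rfl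
  rw [hgoal]
  refine le_trans hfinal (le_of_eq ?_)
  calc A ^ (p - 1) * ((Real.exp (β * (tkhat - tk)) - 1) / β) *
        (2 ^ p * (l₁ ^ p * (∫ τ in tk..tkhat, ‖ξ τ‖ ^ p) +
          l₃ ^ p * (∫ τ in tk..tkhat, ‖d τ‖ ^ p)))
      = (A ^ (p - 1) * ((Real.exp (β * (tkhat - tk)) - 1) / β) * 2 ^ p) *
          (l₁ ^ p * (∫ τ in tk..tkhat, ‖ξ τ‖ ^ p) +
            l₃ ^ p * (∫ τ in tk..tkhat, ‖d τ‖ ^ p)) := by ring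
    _ = _ := by rw [hconst]; ring
end

section
/- Let m₁, m₂, κ, λ₂ > 0 with κ ≠ 2λ₂/m₁, and suppose χ : [t_k, ∞) → [0,∞) is differentiable with χ(t_k) = 0 and χ'(t) ≤ (1 + m₁ χ(t)/2)(κ + λ₂ χ(t)) for all t ≥ t_k. Then for any χ₀ > 0, if χ(t) = χ₀ for some t > t_k, then t - t_k ≥ τ*(χ₀), where τ*(χ₀) = (1/(λ₂ - m₁ κ/2)) · ln( (κ + λ₂ χ₀) / (κ (1 + m₁ χ₀/2)) ). -/
/-- Lower bound on the time for the normalized error `χ` to grow from `0` to `χ₀`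
(generic case `κ ≠ 2λ₂/m₁`), via the comparison principle for
`χ' ≤ (1 + m₁χ/2)(κ + λ₂χ)`. -/
theorem interevent_time_lower_bound (m₁ m₂ κ l₂ tk : ℝ)
    (hm₁ : 0 < m₁) (hm₂ : 0 < m₂) (hκ : 0 < κ) (hl : 0 < l₂)
    (hne : κ ≠ 2 * l₂ / m₁)
    (χ χ' : ℝ → ℝ)
    (hnn : ∀ t ≥ tk, 0 ≤ χ t) (h0 : χ tk = 0)
    (hderiv : ∀ t ≥ tk, HasDerivAt χ (χ' t) t)
    (hineq : ∀ t ≥ tk, χ' t ≤ (1 + m₁ * χ t / 2) * (κ + l₂ * χ t)) :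
    ∀ χ₀ > (0:ℝ), ∀ t > tk, χ t = χ₀ →
      t - tk ≥ 1 / (l₂ - m₁ * κ / 2) *
        Real.log ((κ + l₂ * χ₀) / (κ * (1 + m₁ * χ₀ / 2))) := by
  intro χ₀ hχ₀ t ht hval
  have hc : l₂ - m₁ * κ / 2 ≠ 0 := by
    intro h
    apply hne
    field_simp
    linarith
  set c := 1 / (l₂ - m₁ * κ / 2) with hcdef
  set g : ℝ → ℝ := fun s =>
    c * (Real.log (κ + l₂ * χ s) - Real.log (κ + κ * (m₁ / 2) * χ s)) - (s - tk) with hg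
  have hA : ∀ s ≥ tk, 0 < κ + l₂ * χ s := fun s hs => by
    have := hnn s hs; nlinarith
  have hB : ∀ s ≥ tk, 0 < κ + κ * (m₁ / 2) * χ s := fun s hs => by
    have h := hnn s hs
    have : 0 ≤ κ * (m₁ / 2) * χ s := mul_nonneg (by positivity) h
    linarith
  have hgd : ∀ s ≥ tk, HasDerivAt g
      (c * (l₂ * χ' s / (κ + l₂ * χ s) -
        κ * (m₁ / 2) * χ' s / (κ + κ * (m₁ / 2) * χ s)) - 1) s := by
    intro s hs
    have hA' : HasDerivAt (fun u => κ + l₂ * χ u) (l₂ * χ' s) s :=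
      ((hderiv s hs).const_mul l₂).const_add κ
    have hB' : HasDerivAt (fun u => κ + κ * (m₁ / 2) * χ u) (κ * (m₁ / 2) * χ' s) s :=
      ((hderiv s hs).const_mul (κ * (m₁ / 2))).const_add κ
    have hlA := hA'.log (ne_of_gt (hA s hs))
    have hlB := hB'.log (ne_of_gt (hB s hs))
    have := ((hlA.sub hlB).const_mul c).sub ((hasDerivAt_id s).sub_const tk)
    exact this
  have hle : ∀ s ≥ tk, g s ≤ g tk := by
    intro s hs
    have hanti : AntitoneOn g (Set.Ici tk) := by
      apply antitoneOn_of_deriv_nonpos (convex_Ici tk)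
      · exact fun u hu => ((hgd u hu).continuousAt).continuousWithinAt
      · intro u hu
        rw [interior_Ici] at hu
        exact ((hgd u (le_of_lt hu)).differentiableAt).differentiableWithinAt
      · intro u hu
        rw [interior_Ici] at hu
        have hu' : tk ≤ u := le_of_lt hu
        rw [(hgd u hu').deriv]
        have hApos := hA u hu'
        have hBpos := hB u hu'
        have key : c * (l₂ * χ' u / (κ + l₂ * χ u) -
            κ * (m₁ / 2) * χ' u / (κ + κ * (m₁ / 2) * χ u)) =
            χ' u * κ / ((κ + l₂ * χ u) * (κ + κ * (m₁ / 2) * χ u)) := by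
          rw [div_sub_div _ _ hApos.ne' hBpos.ne', hcdef,
            show l₂ * χ' u * (κ + κ * (m₁ / 2) * χ u) -
              (κ + l₂ * χ u) * (κ * (m₁ / 2) * χ' u) =
              (l₂ - m₁ * κ / 2) * (χ' u * κ) from by ring,
            one_div, ← mul_div_assoc, inv_mul_cancel_left₀ hc]
        rw [key]
        have hχ' : χ' u * κ ≤ (κ + l₂ * χ u) * (κ + κ * (m₁ / 2) * χ u) := by
          have h1 := mul_le_mul_of_nonneg_right (hineq u hu') hκ.le
          have h2 : (1 + m₁ * χ u / 2) * (κ + l₂ * χ u) * κ =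
              (κ + l₂ * χ u) * (κ + κ * (m₁ / 2) * χ u) := by ring
          linarith [h2 ▸ h1]
        have hdiv : χ' u * κ / ((κ + l₂ * χ u) * (κ + κ * (m₁ / 2) * χ u)) ≤ 1 := by
          rw [div_le_one (by positivity)]; exact hχ'
        linarith
    exact hanti Set.self_mem_Ici hs hs
  have hgtk : g tk = 0 := by simp [hg, h0]
  have := hle t (le_of_lt ht)
  rw [hgtk] at this
  have hlog : Real.log ((κ + l₂ * χ₀) / (κ * (1 + m₁ * χ₀ / 2))) =
      Real.log (κ + l₂ * χ₀) - Real.log (κ + κ * (m₁ / 2) * χ₀) := by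
    rw [Real.log_div (by positivity) (by positivity)]
    ring_nf
  have hgt : g t = c * (Real.log (κ + l₂ * χ₀) - Real.log (κ + κ * (m₁ / 2) * χ₀)) - (t - tk) := by
    simp [hg, hval]
  rw [hgt] at this
  rw [hlog]
  linarith
end

section
/- Let m₁, λ₂ > 0 and set κ = 2λ₂/m₁. Suppose χ : [t_k, ∞) → [0,∞) is differentiable with χ(t_k) = 0 and χ'(t) ≤ (1 + m₁ χ(t)/2)(κ + λ₂ χ(t)). Then for any χ₀ > 0, if χ(t) = χ₀ for some t > t_k, then t - t_k ≥ m₁ χ₀ / (λ₂ (2 + m₁ χ₀)). -/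
/-- Degenerate case `κ = 2λ₂/m₁` of the inter-event time lower bound:
if `χ(t_k) = 0` and `χ' ≤ (1 + m₁χ/2)(κ + λ₂χ)`, then the time for `χ` to reach
`χ₀ > 0` is at least `m₁χ₀/(λ₂(2 + m₁χ₀))`. -/
theorem interevent_time_lower_bound_degenerate (m₁ l₂ tk : ℝ)
    (hm₁ : 0 < m₁) (hl : 0 < l₂)
    (χ χ' : ℝ → ℝ)
    (hnn : ∀ t ≥ tk, 0 ≤ χ t) (h0 : χ tk = 0)
    (hderiv : ∀ t ≥ tk, HasDerivAt χ (χ' t) t)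
    (hineq : ∀ t ≥ tk,
      χ' t ≤ (1 + m₁ * χ t / 2) * (2 * l₂ / m₁ + l₂ * χ t)) :
    ∀ χ₀ > (0:ℝ), ∀ t > tk, χ t = χ₀ →
      t - tk ≥ m₁ * χ₀ / (l₂ * (2 + m₁ * χ₀)) := by
  intro χ₀ hχ₀ t ht hval
  set κ : ℝ := 2 * l₂ / m₁ with hκ
  have hκm : κ * m₁ = 2 * l₂ := by rw [hκ]; field_simp
  have hκpos : 0 < κ := by positivity
  set g : ℝ → ℝ := fun s => χ s / (1 + m₁ * χ s / 2) - κ * (s - tk) with hg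
  -- positivity of denominator
  have hD : ∀ s ≥ tk, 0 < 1 + m₁ * χ s / 2 := by
    intro s hs
    have := hnn s hs
    nlinarith
  -- derivative of g on [tk, ∞)
  have hgd : ∀ s ≥ tk, HasDerivAt g (χ' s / (1 + m₁ * χ s / 2) ^ 2 - κ) s := by
    intro s hs
    have hχd := hderiv s hs
    have hden : HasDerivAt (fun s => 1 + m₁ * χ s / 2) (m₁ * χ' s / 2) s := by
      have := ((hχd.const_mul m₁).div_const 2).const_add 1
      simpa [mul_div_assoc] using this
    have hne : (1 + m₁ * χ s / 2) ≠ 0 := (hD s hs).ne'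
    have hdiv := hχd.div hden hne
    have heq : (χ' s * (1 + m₁ * χ s / 2) - χ s * (m₁ * χ' s / 2)) /
        (1 + m₁ * χ s / 2) ^ 2 = χ' s / (1 + m₁ * χ s / 2) ^ 2 := by
      rw [show χ' s * (1 + m₁ * χ s / 2) - χ s * (m₁ * χ' s / 2) = χ' s by ring]
    have := hdiv.sub (((hasDerivAt_id s).sub_const tk).const_mul κ)
    rw [heq, mul_one] at this; exact this
  -- g is antitone on [tk, t]
  have hanti : AntitoneOn g (Set.Icc tk t) := by
    apply antitoneOn_of_deriv_nonpos (convex_Icc tk t)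
    · intro s hs
      exact (hgd s hs.1).continuousAt.continuousWithinAt
    · intro s hs
      rw [interior_Icc] at hs
      exact (hgd s hs.1.le).differentiableAt.differentiableWithinAt
    · intro s hs
      rw [interior_Icc] at hs
      rw [(hgd s hs.1.le).deriv]
      have hDs := hD s hs.1.le
      have h1 := hineq s hs.1.le
      have h2 : χ' s ≤ κ * (1 + m₁ * χ s / 2) ^ 2 := by
        have : (1 + m₁ * χ s / 2) * (2 * l₂ / m₁ + l₂ * χ s)
            = κ * (1 + m₁ * χ s / 2) ^ 2 := by
          rw [hκ]; field_simp
        linarith [h1, this.le, this.ge]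
      rw [sub_nonpos, div_le_iff₀ (by positivity)]
      linarith
  have hgt : g t ≤ g tk :=
    hanti (Set.left_mem_Icc.2 ht.le) (Set.right_mem_Icc.2 ht.le) ht.le
  have hgtk : g tk = 0 := by simp [hg, h0]
  have hkey : χ₀ / (1 + m₁ * χ₀ / 2) ≤ κ * (t - tk) := by
    simp only [hg, h0, hval, zero_div, sub_self, mul_zero, sub_zero] at hgt
    linarith
  have hDχ : 0 < 1 + m₁ * χ₀ / 2 := by nlinarith
  rw [div_le_iff₀ hDχ] at hkey
  rw [ge_iff_le, div_le_iff₀ (by positivity)]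
  nlinarith [hkey, hκm, mul_pos hl hχ₀, sub_nonneg.2 ht.le]
end

section
/- Let ξ : [t_k, ∞) → ℝ^n be differentiable, ε(t) = ξ(t_k) - ξ(t), m₁, m₂ > 0, and define χ(t) = 2‖ε(t)‖ / (m₁‖ξ(t)‖ + m₂). Suppose ‖ξ'(t)‖ ≤ λ₁‖ξ(t)‖ + λ₂‖ε(t)‖ + λ₃‖d(t)‖ with ‖d(t)‖ ≤ ϵ, and set κ = max(2λ₁/m₁, 2λ₃ϵ/m₂). Then at every point t where χ is differentiable, χ'(t) ≤ (1 + m₁ χ(t)/2)(κ + λ₂ χ(t)). -/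
/-- Differential inequality for the normalized error
`χ(t) = 2‖ε(t)‖/(m₁‖ξ(t)‖ + m₂)`: wherever `χ` is differentiable,
`χ' ≤ (1 + m₁χ/2)(κ + λ₂χ)` with `κ = max(2λ₁/m₁, 2λ₃ϵ/m₂)`. -/
theorem normalized_error_differential_inequality (n : ℕ)
    (m₁ m₂ l₁ l₂ l₃ ϵ κ tk : ℝ)
    (hm₁ : 0 < m₁) (hm₂ : 0 < m₂)
    (h₁ : 0 ≤ l₁) (h₂ : 0 ≤ l₂) (h₃ : 0 ≤ l₃) (hϵ : 0 ≤ ϵ)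
    (hκ : κ = max (2 * l₁ / m₁) (2 * l₃ * ϵ / m₂))
    (ξ ξ' d : ℝ → EuclideanSpace ℝ (Fin n))
    (hderiv : ∀ t ≥ tk, HasDerivAt ξ (ξ' t) t)
    (hb : ∀ t ≥ tk, ‖ξ' t‖ ≤ l₁ * ‖ξ t‖ + l₂ * ‖ξ tk - ξ t‖ + l₃ * ‖d t‖)
    (hd : ∀ t ≥ tk, ‖d t‖ ≤ ϵ) :
    ∀ t ≥ tk, ∀ c : ℝ,
      HasDerivAt (fun s => 2 * ‖ξ tk - ξ s‖ / (m₁ * ‖ξ s‖ + m₂)) c t →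
        c ≤ (1 + m₁ * (2 * ‖ξ tk - ξ t‖ / (m₁ * ‖ξ t‖ + m₂)) / 2) *
            (κ + l₂ * (2 * ‖ξ tk - ξ t‖ / (m₁ * ‖ξ t‖ + m₂))) := by
  intro t ht c hc
  set N : ℝ → ℝ := fun s => 2 * ‖ξ tk - ξ s‖ with hN
  set D : ℝ → ℝ := fun s => m₁ * ‖ξ s‖ + m₂ with hDdef
  have hDpos : ∀ s, 0 < D s := by
    intro s; have : (0:ℝ) ≤ ‖ξ s‖ := norm_nonneg _
    simp only [hDdef]; positivity
  have hNnn : ∀ s, 0 ≤ N s := by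
    intro s; simp only [hN]; positivity
  have hκnn : 0 ≤ κ := by
    rw [hκ]
    refine le_trans ?_ (le_max_left _ _)
    positivity
  set L : ℝ := (2 * D t + N t * m₁) / (D t * D t) * ‖ξ' t‖ with hL
  have hξt := hderiv t ht
  have h1 : Filter.Tendsto (fun s => ‖ξ s - ξ t‖ / (s - t)) (nhdsWithin t (Set.Ioi t)) (nhds ‖ξ' t‖) := by
    have hs := hasDerivAt_iff_tendsto_slope.mp hξt
    have hs2 : Filter.Tendsto (slope ξ t) (nhdsWithin t (Set.Ioi t)) (nhds (ξ' t)) :=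
      hs.mono_left (nhdsWithin_mono _ (fun x hx => ne_of_gt hx))
    have hs3 := (continuous_norm.tendsto (ξ' t)).comp hs2
    refine hs3.congr' ?_
    filter_upwards [self_mem_nhdsWithin] with s hs'
    have hst : (0:ℝ) < s - t := sub_pos.mpr hs'
    simp only [Function.comp, slope_def_module, norm_smul, Real.norm_eq_abs,
      abs_inv, abs_of_pos hst]
    rw [div_eq_inv_mul]
  have h2 : Filter.Tendsto (fun s => ((N s / D s) - (N t / D t)) / (s - t))
      (nhdsWithin t (Set.Ioi t)) (nhds c) := by
    have hs := hasDerivAt_iff_tendsto_slope.mp hc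
    have hs2 : Filter.Tendsto (slope (fun s => N s / D s) t) (nhdsWithin t (Set.Ioi t)) (nhds c) :=
      hs.mono_left (nhdsWithin_mono _ (fun x hx => ne_of_gt hx))
    refine hs2.congr ?_
    intro s
    simp [slope_def_field, div_eq_inv_mul, mul_comm]
  have h3 : Filter.Tendsto D (nhdsWithin t (Set.Ioi t)) (nhds (D t)) := by
    have : ContinuousAt D t := by
      have := hξt.continuousAt
      exact (continuousAt_const.mul this.norm).add continuousAt_const
    exact this.continuousWithinAt.tendsto
  have h4 : Filter.Tendsto (fun s => (2 * D t + N t * m₁) / (D s * D t) * (‖ξ s - ξ t‖ / (s - t)))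
      (nhdsWithin t (Set.Ioi t)) (nhds L) := by
    rw [hL]
    exact (Filter.Tendsto.div tendsto_const_nhds (h3.mul tendsto_const_nhds)
      (by positivity : D t * D t ≠ 0)).mul h1
  have key : c ≤ L := by
    refine le_of_tendsto_of_tendsto h2 h4 ?_
    filter_upwards [self_mem_nhdsWithin] with s hs'
    have hst : (0:ℝ) < s - t := sub_pos.mpr hs'
    have hDs := hDpos s; have hDt := hDpos t
    have hΔ1 : N s - N t ≤ 2 * ‖ξ s - ξ t‖ := by
      have h := norm_sub_norm_le (ξ tk - ξ s) (ξ tk - ξ t)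
      have he : (ξ tk - ξ s) - (ξ tk - ξ t) = -(ξ s - ξ t) := by abel
      rw [he, norm_neg] at h
      simp only [hN]; linarith
    have hΔ2 : D t - D s ≤ m₁ * ‖ξ s - ξ t‖ := by
      have h := norm_sub_norm_le (ξ t) (ξ s)
      rw [← norm_neg (ξ t - ξ s), neg_sub] at h
      simp only [hDdef]; nlinarith
    have hnum : N s / D s - N t / D t ≤ (2 * D t + N t * m₁) * ‖ξ s - ξ t‖ / (D s * D t) := by
      rw [div_sub_div _ _ (ne_of_gt hDs) (ne_of_gt hDt)]
      gcongr
      nlinarith [hNnn t, norm_nonneg (ξ s - ξ t)]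
    calc (N s / D s - N t / D t) / (s - t)
        ≤ ((2 * D t + N t * m₁) * ‖ξ s - ξ t‖ / (D s * D t)) / (s - t) := by gcongr
      _ = (2 * D t + N t * m₁) / (D s * D t) * (‖ξ s - ξ t‖ / (s - t)) := by ring
  -- now bound L by the RHS
  have hκ1 : 2 * l₁ ≤ κ * m₁ := by
    have := le_max_left (2 * l₁ / m₁) (2 * l₃ * ϵ / m₂)
    rw [← hκ, div_le_iff₀ hm₁] at this
    linarith
  have hκ2 : 2 * l₃ * ϵ ≤ κ * m₂ := by
    have := le_max_right (2 * l₁ / m₁) (2 * l₃ * ϵ / m₂)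
    rw [← hκ, div_le_iff₀ hm₂] at this
    linarith
  have hB : ‖ξ' t‖ ≤ κ * D t / 2 + l₂ * N t / 2 := by
    have h := hb t ht
    have h' : l₃ * ‖d t‖ ≤ l₃ * ϵ := mul_le_mul_of_nonneg_left (hd t ht) h₃
    simp only [hN, hDdef]
    nlinarith [norm_nonneg (ξ t)]
  have hcoeff : (0:ℝ) ≤ (2 * D t + N t * m₁) / (D t * D t) := by
    have := hDpos t; have := hNnn t; positivity
  have hLle : L ≤ (2 * D t + N t * m₁) / (D t * D t) * (κ * D t / 2 + l₂ * N t / 2) := by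
    rw [hL]; exact mul_le_mul_of_nonneg_left hB hcoeff
  have heq : (2 * D t + N t * m₁) / (D t * D t) * (κ * D t / 2 + l₂ * N t / 2)
      = (1 + m₁ * (N t / D t) / 2) * (κ + l₂ * (N t / D t)) := by
    have hDt := hDpos t
    field_simp
  show c ≤ (1 + m₁ * (N t / D t) / 2) * (κ + l₂ * (N t / D t))
  calc c ≤ L := key
    _ ≤ _ := hLle
    _ = _ := heq
end
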